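/- Every element of the Zorn vector matrix algebra over a field k is the sum of two elements of norm 1. -/
import Mathlib


/-- Zorn vector matrices `[[a, α], [β, b]]` over a field `k`. -/
@[ext]
structure Zorn (k : Type*) where
  a : k
  α : Fin 3 → k
  β : Fin 3 → k
  b : k

namespace Zorn

variable {k : Type*} [Field k]

/-- Dot product on `k³`. -/
def dot (u v : Fin 3 → k) : k := u 0 * v 0 + u 1 * v 1 + u 2 * v 2

/-- Cross product on `k³`. -/
def cross (u v : Fin 3 → k) : Fin 3 → k :=
  ![u 1 * v 2 - u 2 * v 1, u 2 * v 0 - u 0 * v 2, u 0 * v 1 - u 1 * v 0]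

/-- Zorn vector matrix multiplication. -/
instance : Mul (Zorn k) :=
  ⟨fun x y =>
    ⟨x.a * y.a + dot x.α y.β,
     fun i => x.a * y.α i + y.b * x.α i - cross x.β y.β i,
     fun i => y.a * x.β i + x.b * y.β i + cross x.α y.α i,
     dot x.β y.α + x.b * y.b⟩⟩

instance : One (Zorn k) := ⟨⟨1, 0, 0, 1⟩⟩
instance : Zero (Zorn k) := ⟨⟨0, 0, 0, 0⟩⟩
instance : Add (Zorn k) := ⟨fun x y => ⟨x.a + y.a, x.α + y.α, x.β + y.β, x.b + y.b⟩⟩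
instance : Neg (Zorn k) := ⟨fun x => ⟨-x.a, -x.α, -x.β, -x.b⟩⟩
instance : SMul k (Zorn k) := ⟨fun c x => ⟨c * x.a, c • x.α, c • x.β, c * x.b⟩⟩

/-- The norm (determinant) of a Zorn vector matrix. -/
def N (x : Zorn k) : k := x.a * x.b - dot x.α x.β

/-- The bilinear form associated with the norm. -/
def polarN (x y : Zorn k) : k := N (x + y) - N x - N y



lemma add_def (y z : Zorn k) :
    y + z = ⟨y.a + z.a, y.α + z.α, y.β + z.β, y.b + z.b⟩ := rfl

lemma dot_comm (u v : Fin 3 → k) : dot u v = dot v u := by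
  simp only [dot]; ring

lemma exists_dot {v : Fin 3 → k} (hv : v ≠ 0) (c : k) : ∃ w, dot v w = c := by
  obtain ⟨i, hi⟩ : ∃ i, v i ≠ 0 := by
    by_contra h; push_neg at h; exact hv (funext h)
  refine ⟨fun j => if j = i then c / v i else 0, ?_⟩
  fin_cases i <;> simp [dot] <;> exact mul_div_cancel₀ c hi

/-- Every element of the Zorn vector matrix algebra is a sum of two elements of norm one. -/
theorem sum_of_two_norm_one (x : Zorn k) :
    ∃ y z : Zorn k, N y = 1 ∧ N z = 1 ∧ x = y + z := by
  by_cases hα : x.α = 0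
  · by_cases hβ : x.β = 0
    · refine ⟨⟨x.a, ![1,0,0], ![-1,0,0], 0⟩, ⟨0, ![-1,0,0], ![1,0,0], x.b⟩, ?_, ?_, ?_⟩
      · simp [N, dot]
      · simp [N, dot]
      · simp only [add_def]; ext i <;> simp [hα, hβ] <;> fin_cases i <;> simp
    · obtain ⟨w, hw⟩ := exists_dot hβ ((x.a - 1) * (x.b - 1) - 1)
      refine ⟨⟨1, x.α - w, 0, 1⟩, ⟨x.a - 1, w, x.β, x.b - 1⟩, ?_, ?_, ?_⟩
      · simp [N, dot]
      · simp only [N, dot_comm w x.β, hw]; ring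
      · simp only [add_def]; ext i <;> simp
  · obtain ⟨w, hw⟩ := exists_dot hα ((x.a - 1) * (x.b - 1) - 1)
    refine ⟨⟨1, 0, x.β - w, 1⟩, ⟨x.a - 1, x.α, w, x.b - 1⟩, ?_, ?_, ?_⟩
    · simp [N, dot]
    · simp only [N, hw]; ring
    · simp only [add_def]; ext i <;> simp


end Zorn
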